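/- Let s, t ∈ ℂ with |s|² ≥ |t|² + 1 and let w ∈ ℂ. Then e^{−|w|²/2} · sup_{z∈ℂ} |K^{(s,t)}(z,w)|·e^{−|z|²/2} ≤ C · exp( −(|s|²−|t|²−1)·(|s|²−1)·|w|²/(2|s|²·(3|s|²−|t|²+1)) ), where C = |s|^{−1/2}·(2|s|/√(4|s|²−|t|²))^{2(4|s|²−|t|²)/(3|s|²−|t|²+1)}. -/

import Mathlib

set_option maxHeartbeats 2000000

open MeasureTheory Real Filter
open scoped ENNReal

noncomputable def csqrt (z : ℂ) : ℂ := z ^ ((1 : ℂ) / 2)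

noncomputable def Kst (s t z w : ℂ) : ℂ :=
  (csqrt s)⁻¹ *
    Complex.exp ((t * z ^ 2 - (starRingEnd ℂ) t * ((starRingEnd ℂ) w) ^ 2
      + 2 * z * (starRingEnd ℂ) w) / (2 * s))

lemma quadbound (u v z : ℂ) (hu : 4 * ‖u‖ ^ 2 < 1) :
    (u * z ^ 2 + v * z).re - ‖z‖ ^ 2 / 2 ≤
      (2 * ((starRingEnd ℂ) u * v ^ 2).re + ‖v‖ ^ 2) /
        (2 * (1 - 4 * ‖u‖ ^ 2)) := by
  set d : ℝ := 1 - 4 * ‖u‖ ^ 2 with hdd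
  have hd : 0 < d := by simp [hdd]; linarith
  set δ : ℂ := (d : ℂ) * z - (2 * (starRingEnd ℂ) u * v + (starRingEnd ℂ) v) with hδ
  have hdr : d = 1 - 4 * (u.re ^ 2 + u.im ^ 2) := by
    rw [hdd, Complex.sq_norm, Complex.normSq_apply]; ring
  have hId : d * (d * (Complex.normSq z - 2 * (u * z ^ 2 + v * z).re)
        + 2 * ((starRingEnd ℂ) u * v ^ 2).re + Complex.normSq v)
      = Complex.normSq δ - 2 * (u * δ ^ 2).re := by
    simp only [hδ, hdr, Complex.normSq_apply, Complex.mul_re, Complex.mul_im,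
      Complex.sub_re, Complex.sub_im, Complex.add_re, Complex.add_im,
      Complex.conj_re, Complex.conj_im, Complex.ofReal_re, Complex.ofReal_im,
      Complex.re_ofNat, Complex.im_ofNat, pow_two]
    ring
  have habs : (u * δ ^ 2).re ≤ ‖u‖ * ‖δ‖ ^ 2 := by
    calc (u * δ ^ 2).re ≤ ‖u * δ ^ 2‖ := Complex.re_le_norm _
    _ = ‖u‖ * ‖δ‖ ^ 2 := by simp [map_mul]
  have hu2 : 2 * ‖u‖ ≤ 1 := by
    nlinarith [norm_nonneg u]
  have hQ : 0 ≤ Complex.normSq δ - 2 * (u * δ ^ 2).re := by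
    have h1 : Complex.normSq δ = ‖δ‖ ^ 2 := (Complex.sq_norm δ).symm
    nlinarith [sq_nonneg (‖δ‖), norm_nonneg u]
  have hbr : 0 ≤ d * (Complex.normSq z - 2 * (u * z ^ 2 + v * z).re)
        + 2 * ((starRingEnd ℂ) u * v ^ 2).re + Complex.normSq v := by
    nlinarith [hId, hQ, hd]
  rw [le_div_iff₀ (by linarith : (0:ℝ) < 2 * d)]
  have h2 : Complex.normSq z = ‖z‖ ^ 2 := (Complex.sq_norm z).symm
  have h3 : Complex.normSq v = ‖v‖ ^ 2 := (Complex.sq_norm v).symm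
  rw [h2, h3] at hbr
  ring_nf at hbr ⊢
  linarith [hbr]

theorem stmt15 (s t : ℂ) (hst : ‖s‖ ^ 2 ≥ ‖t‖ ^ 2 + 1) (w : ℂ)
    (C : ℝ)
    (hC : C = ‖s‖ ^ (-(1 : ℝ) / 2) *
      (2 * ‖s‖ / Real.sqrt (4 * ‖s‖ ^ 2 - ‖t‖ ^ 2)) ^
        (2 * (4 * ‖s‖ ^ 2 - ‖t‖ ^ 2) /
          (3 * ‖s‖ ^ 2 - ‖t‖ ^ 2 + 1))) :
    (⨆ z : ℂ, ENNReal.ofReal (Real.exp (-‖w‖ ^ 2 / 2) *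
        (‖Kst s t z w‖ * Real.exp (-‖z‖ ^ 2 / 2))))
      ≤ ENNReal.ofReal (C *
          Real.exp (-((‖s‖ ^ 2 - ‖t‖ ^ 2 - 1) * (‖s‖ ^ 2 - 1) *
              ‖w‖ ^ 2) /
            (2 * ‖s‖ ^ 2 * (3 * ‖s‖ ^ 2 - ‖t‖ ^ 2 + 1)))) := by
  set a : ℝ := ‖s‖ with ha
  set b : ℝ := ‖t‖ with hb
  set ρ : ℝ := ‖w‖ with hρ
  have hb0 : 0 ≤ b := norm_nonneg t
  have hρ0 : 0 ≤ ρ := norm_nonneg w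
  have ha1 : 1 ≤ a := by nlinarith [norm_nonneg s]
  have ha0 : 0 < a := by linarith
  have hba : b < a := by nlinarith
  have hs : s ≠ 0 := by
    intro h; rw [h] at ha; simp at ha; rw [ha] at ha1; linarith
  have hg : (0:ℝ) < a ^ 2 - b ^ 2 := by nlinarith
  have hg1 : (1:ℝ) ≤ a ^ 2 - b ^ 2 := by nlinarith
  -- C ≥ a^{-1/2}
  have hM1 : (1:ℝ) ≤ 2 * a / Real.sqrt (4 * a ^ 2 - b ^ 2) := by
    rw [le_div_iff₀ (Real.sqrt_pos.2 (by nlinarith : (0:ℝ) < 4 * a ^ 2 - b ^ 2))]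
    rw [one_mul]
    have : Real.sqrt (4 * a ^ 2 - b ^ 2) ≤ Real.sqrt ((2*a) ^ 2) := by
      apply Real.sqrt_le_sqrt; nlinarith
    rwa [Real.sqrt_sq (by linarith)] at this
  have hCge : a ^ (-(1:ℝ)/2) ≤ C := by
    rw [hC]
    nth_rewrite 1 [← mul_one (a ^ (-(1:ℝ)/2))]
    apply mul_le_mul_of_nonneg_left _ (Real.rpow_nonneg ha0.le _)
    apply Real.one_le_rpow hM1
    apply div_nonneg (by nlinarith) (by nlinarith)
  -- per-z bound
  apply iSup_le
  intro z
  apply ENNReal.ofReal_le_ofReal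
  -- compute |Kst|
  have hcs : ‖csqrt s‖ = a ^ ((1:ℝ)/2) := by
    rw [csqrt, show ((1:ℂ)/2) = (((1/2 : ℝ)) : ℂ) by norm_num,
      Complex.norm_cpow_real]
  have hK : ‖Kst s t z w‖ = (a ^ ((1:ℝ)/2))⁻¹ *
      Real.exp (((t * z ^ 2 - (starRingEnd ℂ) t * ((starRingEnd ℂ) w) ^ 2
        + 2 * z * (starRingEnd ℂ) w) / (2 * s)).re) := by
    rw [Kst, norm_mul, norm_inv, hcs, Complex.norm_exp]
  -- the exponent bound
  set Ξ : ℝ := ((t * z ^ 2 - (starRingEnd ℂ) t * ((starRingEnd ℂ) w) ^ 2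
        + 2 * z * (starRingEnd ℂ) w) / (2 * s)).re with hΞ
  have hexp : Ξ - ‖z‖ ^ 2 / 2 - ρ ^ 2 / 2 ≤
      -((a ^ 2 - b ^ 2 - 1) * (a ^ 2 - 1) * ρ ^ 2) / (2 * a ^ 2 * (3 * a ^ 2 - b ^ 2 + 1)) := by
    set u : ℂ := t / (2 * s) with hu
    set v : ℂ := (starRingEnd ℂ) w / s with hv
    set X : ℝ := (((starRingEnd ℂ) t * ((starRingEnd ℂ) w) ^ 2) / (2 * s)).re with hX
    have hsplit : (t * z ^ 2 - (starRingEnd ℂ) t * ((starRingEnd ℂ) w) ^ 2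
        + 2 * z * (starRingEnd ℂ) w) / (2 * s)
        = u * z ^ 2 + v * z - ((starRingEnd ℂ) t * ((starRingEnd ℂ) w) ^ 2) / (2 * s) := by
      rw [hu, hv]; field_simp; ring
    have hΞeq : Ξ = (u * z ^ 2 + v * z).re - X := by
      rw [hΞ, hsplit, Complex.sub_re, hX]
    have hau : ‖u‖ = b / (2 * a) := by
      rw [hu, norm_div, norm_mul, Complex.norm_two, ← hb, ← ha]
    have hav : ‖v‖ = ρ / a := by
      rw [hv, norm_div, Complex.norm_conj, ← hρ, ← ha]
    have ha2 : (0:ℝ) < a ^ 2 := by nlinarith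
    have hu4 : 4 * ‖u‖ ^ 2 < 1 := by
      have h1 : ‖u‖ ^ 2 = b ^ 2 / (4 * a ^ 2) := by
        rw [hau, div_pow]; congr 1; ring
      have h2 : 4 * (b ^ 2 / (4 * a ^ 2)) = b ^ 2 / a ^ 2 := by
        field_simp
      rw [h1, h2, div_lt_one ha2]
      nlinarith
    have hd2 : 1 - 4 * ‖u‖ ^ 2 = (a ^ 2 - b ^ 2) / a ^ 2 := by
      rw [hau]; field_simp; ring
    have hreuv : ((starRingEnd ℂ) u * v ^ 2).re = X / a ^ 2 := by
      have hsc : ((a ^ 2 : ℝ) : ℂ) = s * (starRingEnd ℂ) s := by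
        rw [← Complex.normSq_eq_norm_sq, Complex.mul_conj]
      have hcs0 : (starRingEnd ℂ) s ≠ 0 := by simpa using hs
      have heq : ((a ^ 2 : ℝ) : ℂ) * ((starRingEnd ℂ) u * v ^ 2)
          = ((starRingEnd ℂ) t * ((starRingEnd ℂ) w) ^ 2) / (2 * s) := by
        rw [hsc, hu, hv]
        rw [map_div₀, map_mul]
        simp only [Complex.conj_conj, map_ofNat]
        field_simp
      have h5 := congrArg Complex.re heq
      rw [Complex.re_ofReal_mul] at h5
      rw [← hX] at h5
      rw [eq_div_iff (by nlinarith : (a:ℝ) ^ 2 ≠ 0)]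
      linarith [h5]
    have habsX : |X| ≤ b * ρ ^ 2 / (2 * a) := by
      have : ‖((starRingEnd ℂ) t * ((starRingEnd ℂ) w) ^ 2) / (2 * s)‖
          = b * ρ ^ 2 / (2 * a) := by
        rw [norm_div, norm_mul, norm_pow, Complex.norm_conj, Complex.norm_conj,
          norm_mul, Complex.norm_two, ← hb, ← hρ, ← ha]
      rw [hX, ← this]
      exact Complex.abs_re_le_norm _
    have hqb := quadbound u v z hu4
    rw [hd2, hav, hreuv] at hqb
    have hrhs : (2 * (X / a ^ 2) + (ρ / a) ^ 2) / (2 * ((a ^ 2 - b ^ 2) / a ^ 2))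
        = (2 * X + ρ ^ 2) / (2 * (a ^ 2 - b ^ 2)) := by
      field_simp
    rw [hrhs] at hqb
    -- step 1
    have hXlb : -(b * ρ ^ 2) ≤ 2 * a * X := by
      have h1 : -(b * ρ ^ 2 / (2 * a)) ≤ X := by
        have := abs_le.1 habsX
        linarith [this.1]
      have := mul_le_mul_of_nonneg_left h1 (by linarith : (0:ℝ) ≤ 2 * a)
      calc -(b * ρ ^ 2) = (2 * a) * (-(b * ρ ^ 2 / (2 * a))) := by field_simp
      _ ≤ (2 * a) * X := this
      _ = 2 * a * X := by ring
    have hstep1 : (2 * X + ρ ^ 2) / (2 * (a ^ 2 - b ^ 2)) - X - ρ ^ 2 / 2 ≤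
        -(ρ ^ 2 * (a - b) * (a ^ 2 - b ^ 2 - 1)) / (2 * a * (a ^ 2 - b ^ 2)) := by
      have heq1 : (2 * X + ρ ^ 2) / (2 * (a ^ 2 - b ^ 2)) - X - ρ ^ 2 / 2
          = -(ρ ^ 2 * (a - b) * (a ^ 2 - b ^ 2 - 1)) / (2 * a * (a ^ 2 - b ^ 2))
            - ((a ^ 2 - b ^ 2 - 1) * (2 * a * X + b * ρ ^ 2)) / (2 * a * (a ^ 2 - b ^ 2)) := by
        field_simp
        ring
      rw [heq1]
      have hnn : 0 ≤ ((a ^ 2 - b ^ 2 - 1) * (2 * a * X + b * ρ ^ 2)) / (2 * a * (a ^ 2 - b ^ 2)) := by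
        apply div_nonneg _ (by positivity)
        apply mul_nonneg (by linarith)
        linarith
      linarith
    -- step 2
    have hstep2 : -(ρ ^ 2 * (a - b) * (a ^ 2 - b ^ 2 - 1)) / (2 * a * (a ^ 2 - b ^ 2)) ≤
        -((a ^ 2 - b ^ 2 - 1) * (a ^ 2 - 1) * ρ ^ 2) / (2 * a ^ 2 * (3 * a ^ 2 - b ^ 2 + 1)) := by
      rw [div_le_div_iff₀ (by nlinarith [mul_pos ha0 hg] : (0:ℝ) < 2 * a * (a ^ 2 - b ^ 2))
        (by nlinarith [mul_pos ha2 (show (0:ℝ) < 3 * a ^ 2 - b ^ 2 + 1 by nlinarith)] :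
          (0:ℝ) < 2 * a ^ 2 * (3 * a ^ 2 - b ^ 2 + 1))]
      have hk : 0 ≤ 2 * a ^ 3 - a * b ^ 2 - a ^ 2 * b + 2 * a + b := by
        nlinarith [mul_nonneg (mul_nonneg ha0.le ha0.le) (sub_pos.2 hba).le,
          mul_nonneg ha0.le hg.le]
      have hdiff : (-((a ^ 2 - b ^ 2 - 1) * (a ^ 2 - 1) * ρ ^ 2)) * (2 * a * (a ^ 2 - b ^ 2))
          - (-(ρ ^ 2 * (a - b) * (a ^ 2 - b ^ 2 - 1))) * (2 * a ^ 2 * (3 * a ^ 2 - b ^ 2 + 1))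
          = 2 * a * ρ ^ 2 * (a ^ 2 - b ^ 2 - 1) * (a - b)
            * (2 * a ^ 3 - a * b ^ 2 - a ^ 2 * b + 2 * a + b) := by ring
      have hprod : 0 ≤ 2 * a * ρ ^ 2 * (a ^ 2 - b ^ 2 - 1) * (a - b)
            * (2 * a ^ 3 - a * b ^ 2 - a ^ 2 * b + 2 * a + b) := by
        apply mul_nonneg _ hk
        apply mul_nonneg _ (by linarith : (0:ℝ) ≤ a - b)
        apply mul_nonneg _ (by linarith : (0:ℝ) ≤ a ^ 2 - b ^ 2 - 1)
        apply mul_nonneg (by linarith) (sq_nonneg ρ)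
      linarith [hdiff, hprod]
    calc Ξ - ‖z‖ ^ 2 / 2 - ρ ^ 2 / 2
        = ((u * z ^ 2 + v * z).re - ‖z‖ ^ 2 / 2) - X - ρ ^ 2 / 2 := by
          rw [hΞeq]; ring
      _ ≤ (2 * X + ρ ^ 2) / (2 * (a ^ 2 - b ^ 2)) - X - ρ ^ 2 / 2 := by linarith [hqb]
      _ ≤ -((a ^ 2 - b ^ 2 - 1) * (a ^ 2 - 1) * ρ ^ 2) / (2 * a ^ 2 * (3 * a ^ 2 - b ^ 2 + 1)) := by
          linarith [hstep1, hstep2]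
  -- assemble
  rw [hK]
  have hfin : Real.exp (-ρ ^ 2 / 2) * ((a ^ ((1:ℝ)/2))⁻¹ * Real.exp Ξ * Real.exp (-‖z‖ ^ 2 / 2))
      = (a ^ ((1:ℝ)/2))⁻¹ * Real.exp (Ξ - ‖z‖ ^ 2 / 2 - ρ ^ 2 / 2) := by
    rw [show Ξ - ‖z‖ ^ 2 / 2 - ρ ^ 2 / 2
        = -ρ ^ 2 / 2 + (Ξ + -‖z‖ ^ 2 / 2) from by ring,
      Real.exp_add, Real.exp_add]; ring
  rw [hfin]
  have hinv : (a ^ ((1:ℝ)/2))⁻¹ = a ^ (-(1:ℝ)/2) := by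
    rw [← Real.rpow_neg ha0.le]; norm_num
  calc (a ^ ((1:ℝ)/2))⁻¹ * Real.exp (Ξ - ‖z‖ ^ 2 / 2 - ρ ^ 2 / 2)
      ≤ (a ^ ((1:ℝ)/2))⁻¹ * Real.exp (-((a ^ 2 - b ^ 2 - 1) * (a ^ 2 - 1) * ρ ^ 2) /
          (2 * a ^ 2 * (3 * a ^ 2 - b ^ 2 + 1))) := by
        apply mul_le_mul_of_nonneg_left (Real.exp_le_exp.2 hexp) (by positivity)
    _ ≤ C * Real.exp (-((a ^ 2 - b ^ 2 - 1) * (a ^ 2 - 1) * ρ ^ 2) /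
          (2 * a ^ 2 * (3 * a ^ 2 - b ^ 2 + 1))) := by
        apply mul_le_mul_of_nonneg_right _ (Real.exp_nonneg _)
        rw [hinv]; exact hCge
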